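/- Primal–dual error transfer: let f_1,…,f_N : ℝ^d → ℝ be α-strongly convex and differentiable, let G(y) = Σ_i f_i*(y_i) be the dual objective on the constraint Σ_i y_i = 0, with dual optimum y* and primal optimum w* = ∇f_i*(y_i*) for every i. Suppose y^{(t)} is feasible (Σ_i y_i^{(t)} = 0), w_i^{(t)} = ∇f_i*(y_i^{(t)}), and ŵ^{(t)} is chosen uniformly at random from {w_1^{(t)},…,w_N^{(t)}}. Then 𝔼[‖ŵ^{(t)} − w*‖²] ≤ (2/(Nα)) (G(y^{(t)}) − G(y*)). -/

import Mathlib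

open BigOperators Finset
open scoped RealInnerProductSpace

/-- Primal–dual error transfer: with α-strongly convex f_i, dual objective
G(y) = ∑ f_i*(y_i) over the constraint ∑ y_i = 0, dual optimum y*, primal
optimum w* = ∇f_i*(y_i*) (i.e. ∇f_i(w*) = y_i*), feasible y^{(t)} and
w_i = ∇f_i*(y_i^{(t)}) (i.e. ∇f_i(w_i) = y_i^{(t)}), the uniformly random
choice ŵ among the w_i satisfies
`𝔼‖ŵ − w*‖² ≤ (2/(Nα))(G(y^{(t)}) − G(y*))`. -/
theorem stmt18 {d N : ℕ} (hN : 0 < N) (α : ℝ) (hα : 0 < α)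
    (f : Fin N → EuclideanSpace ℝ (Fin d) → ℝ)
    (gf : Fin N → EuclideanSpace ℝ (Fin d) → EuclideanSpace ℝ (Fin d))
    (hdiff : ∀ i w, HasGradientAt (f i) (gf i w) w)
    (hsc : ∀ i w v, f i v + ⟪gf i v, w - v⟫ + α / 2 * ‖w - v‖ ^ 2 ≤ f i w)
    (fstar : Fin N → EuclideanSpace ℝ (Fin d) → ℝ)
    (hfstar : ∀ i y, fstar i y = ⨆ w : EuclideanSpace ℝ (Fin d), (⟪y, w⟫ - f i w))
    (G : (Fin N → EuclideanSpace ℝ (Fin d)) → ℝ)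
    (hG : ∀ y, G y = ∑ i, fstar i (y i))
    (ystar : Fin N → EuclideanSpace ℝ (Fin d))
    (hystarfeas : ∑ i, ystar i = 0)
    (hystaropt : ∀ y : Fin N → EuclideanSpace ℝ (Fin d), (∑ i, y i = 0) → G ystar ≤ G y)
    (wstar : EuclideanSpace ℝ (Fin d))
    (hwstar : ∀ i, gf i wstar = ystar i)
    (yt : Fin N → EuclideanSpace ℝ (Fin d)) (hyt : ∑ i, yt i = 0)
    (w : Fin N → EuclideanSpace ℝ (Fin d))
    (hw : ∀ i, gf i (w i) = yt i) :
    (1 / (N : ℝ)) * ∑ i, ‖w i - wstar‖ ^ 2 ≤ 2 / ((N : ℝ) * α) * (G yt - G ystar) := by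
  have key : ∀ i, α / 2 * ‖w i - wstar‖ ^ 2 + ⟪yt i - ystar i, wstar⟫
      ≤ fstar i (yt i) - fstar i (ystar i) := by
    intro i
    have h1 : ⟪yt i, w i⟫ - f i (w i) ≤ fstar i (yt i) := by
      rw [hfstar]
      apply le_ciSup (f := fun w' : EuclideanSpace ℝ (Fin d) => ⟪yt i, w'⟫ - f i w')
      refine ⟨⟪yt i, w i⟫ - f i (w i), ?_⟩
      rintro x ⟨w', rfl⟩
      have h := hsc i w' (w i)
      rw [hw i] at h
      have hn : (0:ℝ) ≤ α / 2 * ‖w' - w i‖ ^ 2 := by positivity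
      have hsplit : ⟪yt i, w'⟫ = ⟪yt i, w i⟫ + ⟪yt i, w' - w i⟫ := by
        rw [inner_sub_right]; ring
      simp only
      linarith
    have h2 : fstar i (ystar i) ≤ ⟪ystar i, wstar⟫ - f i wstar := by
      rw [hfstar]
      apply ciSup_le
      intro w'
      have h := hsc i w' wstar
      rw [hwstar i] at h
      have hn : (0:ℝ) ≤ α / 2 * ‖w' - wstar‖ ^ 2 := by positivity
      have hsplit : ⟪ystar i, w'⟫ = ⟪ystar i, wstar⟫ + ⟪ystar i, w' - wstar⟫ := by
        rw [inner_sub_right]; ring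
      linarith
    have h3 := hsc i wstar (w i)
    rw [hw i] at h3
    have hn1 : ‖wstar - w i‖ = ‖w i - wstar‖ := norm_sub_rev _ _
    rw [hn1] at h3
    have hsplit1 : ⟪yt i, wstar - w i⟫ = ⟪yt i, wstar⟫ - ⟪yt i, w i⟫ := by
      rw [inner_sub_right]
    have hsplit2 : ⟪yt i - ystar i, wstar⟫ = ⟪yt i, wstar⟫ - ⟪ystar i, wstar⟫ := by
      rw [inner_sub_left]
    rw [hsplit1] at h3
    rw [hsplit2]
    linarith
  have hsum : α / 2 * (∑ i, ‖w i - wstar‖ ^ 2) ≤ G yt - G ystar := by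
    have h := Finset.sum_le_sum (s := Finset.univ) (fun i _ => key i)
    rw [Finset.sum_add_distrib] at h
    have hz : ∑ i, ⟪yt i - ystar i, wstar⟫ = 0 := by
      rw [← sum_inner]
      have : ∑ i, (yt i - ystar i) = 0 := by
        rw [Finset.sum_sub_distrib, hyt, hystarfeas, sub_zero]
      rw [this, inner_zero_left]
    rw [hz, add_zero, ← Finset.mul_sum] at h
    rw [hG yt, hG ystar, ← Finset.sum_sub_distrib]
    exact h
  have hNpos : (0:ℝ) < N := by exact_mod_cast hN
  have heq : (1 / (N : ℝ)) * ∑ i, ‖w i - wstar‖ ^ 2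
      = 2 / ((N : ℝ) * α) * (α / 2 * ∑ i, ‖w i - wstar‖ ^ 2) := by
    field_simp
  rw [heq]
  apply mul_le_mul_of_nonneg_left hsum
  positivity
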